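/- arXiv:1507.03848 — 3 statements merged into one kernel-verified Lean document; each statement's English description precedes it below -/
import Mathlib

section
/- Let (D_i, U_i), i ≥ 1, be i.i.d. pairs of real random variables with D_i ≤ 0 ≤ U_i and D_i independent of U_i, and let D, U be independent copies of D_1, U_1 respectively, independent of everything else. Define Ŝ_i = Σ_{j≤i}(D_j+U_j), S_i = D_1 + Σ_{j<i+1, j≥1}(U_j+D_{j+1}) as above, and for u ≥ 0 define φ(u) = P(u + inf_{i≥0} S_i ≥ 0) and φ̂(u) = P(u + inf_{i≥0} Ŝ_i ≥ 0). Then for every u ≥ 0: φ̂(u) = E[φ(u+U)] and φ(u) = E[φ̂(u+D)]. -/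
open MeasureTheory ProbabilityTheory Filter Set

section Aux
variable {Ω ι β : Type*} [MeasurableSpace Ω] [MeasurableSpace β] {P : Measure Ω}

-- (aux lemmas inserted here by script)


lemma aux_option [IsProbabilityMeasure P] (X : ι → Ω → β) (Y : Ω → β)
    (hX : ∀ i, Measurable (X i))
    (hXi : iIndepFun X P)
    (hYX : IndepFun Y (fun ω i => X i ω) P) :
    iIndepFun (fun o : Option ι => Option.elim o Y X) P := by
  classical
  rw [iIndepFun_iff_measure_inter_preimage_eq_mul]
  intro S sets hsets
  set T : Finset ι := S.preimage some (fun a _ b _ h => Option.some_injective ι h) with hT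
  have hTmem : ∀ i, i ∈ T ↔ some i ∈ S := fun i => Finset.mem_preimage
  have hTimg : T.image some = S.erase none := by
    ext o
    cases o with
    | none => simp
    | some i => simp [hTmem]
  by_cases hnone : none ∈ S
  · have hI : (⋂ o ∈ S, (fun o : Option ι => Option.elim o Y X) o ⁻¹' sets o)
        = Y ⁻¹' sets none ∩ ((fun ω i => X i ω) ⁻¹' Set.pi (↑T) (fun i => sets (some i))) := by
      ext ω
      simp only [Set.mem_iInter, Set.mem_inter_iff, Set.mem_preimage, Set.mem_pi,
        Finset.mem_coe]
      constructor
      · intro h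
        exact ⟨h none hnone, fun i hi => h (some i) ((hTmem i).1 hi)⟩
      · rintro ⟨h1, h2⟩ o ho
        cases o with
        | none => exact h1
        | some i => exact h2 i ((hTmem i).2 ho)
    have hpiM : MeasurableSet (Set.pi (↑T) (fun i => sets (some i))) :=
      MeasurableSet.pi T.countable_toSet (fun i hi => hsets _ ((hTmem i).1 hi))
    have hvec : ((fun ω i => X i ω) ⁻¹' Set.pi (↑T) (fun i => sets (some i)))
        = ⋂ i ∈ T, X i ⁻¹' sets (some i) := by
      ext ω; simp [Set.mem_pi]
    rw [hI, hYX.measure_inter_preimage_eq_mul _ _ (hsets none hnone) hpiM, hvec,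
      hXi.measure_inter_preimage_eq_mul T (fun i hi => hsets _ ((hTmem i).1 hi))]
    rw [← Finset.mul_prod_erase S _ hnone, ← hTimg,
      Finset.prod_image (fun a _ b _ h => Option.some_injective ι h)]
    rfl
  · have hSsub : S = T.image some := by
      rw [hTimg, Finset.erase_eq_of_notMem hnone]
    rw [hSsub]
    have hI : (⋂ o ∈ T.image some, (fun o : Option ι => Option.elim o Y X) o ⁻¹' sets o)
        = ⋂ i ∈ T, X i ⁻¹' sets (some i) := by
      ext ω
      simp only [Set.mem_iInter, Set.mem_preimage, Finset.mem_image]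
      constructor
      · intro h i hi
        exact h (some i) ⟨i, hi, rfl⟩
      · rintro h o ⟨i, hi, rfl⟩
        exact h i hi
    rw [hI, hXi.measure_inter_preimage_eq_mul T
      (fun i hi => hsets _ (hSsub ▸ Finset.mem_image_of_mem some hi)),
      Finset.prod_image (fun a _ b _ h => Option.some_injective ι h)]
    rfl


lemma aux_split [IsProbabilityMeasure P] (A B : ι → Ω → ℝ)
    (hA : ∀ i, Measurable (A i)) (hB : ∀ i, Measurable (B i))
    (hpairs : iIndepFun (fun i ω => (A i ω, B i ω)) P)
    (hAB : ∀ i, IndepFun (A i) (B i) P) :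
    iIndepFun (fun k : ι × Bool => if k.2 then B k.1 else A k.1) P := by
  classical
  rw [iIndepFun_iff_measure_inter_preimage_eq_mul]
  intro S sets hsets
  set F : ι × Bool → Ω → ℝ := fun k => if k.2 then B k.1 else A k.1 with hF
  set s1 : ι → Set ℝ := fun i => if (i, false) ∈ S then sets (i, false) else Set.univ with hs1
  set s2 : ι → Set ℝ := fun i => if (i, true) ∈ S then sets (i, true) else Set.univ with hs2
  have hs1M : ∀ i, MeasurableSet (s1 i) := by
    intro i; by_cases h : (i, false) ∈ S <;> simp only [hs1, h, if_true, if_false]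
    · exact hsets _ h
    · exact MeasurableSet.univ
  have hs2M : ∀ i, MeasurableSet (s2 i) := by
    intro i; by_cases h : (i, true) ∈ S <;> simp only [hs2, h, if_true, if_false]
    · exact hsets _ h
    · exact MeasurableSet.univ
  set T : Finset ι := S.image Prod.fst with hTdef
  -- the intersection identity
  have hI : (⋂ k ∈ S, F k ⁻¹' sets k)
      = ⋂ i ∈ T, (fun ω => (A i ω, B i ω)) ⁻¹' (s1 i ×ˢ s2 i) := by
    ext ω
    simp only [Set.mem_iInter, Set.mem_preimage, Set.mem_prod]
    constructor
    · intro h i _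
      constructor
      · by_cases hf : (i, false) ∈ S
        · have := h (i, false) hf
          simpa [hF, hs1, hf] using this
        · simp [hs1, hf]
      · by_cases ht : (i, true) ∈ S
        · have := h (i, true) ht
          simpa [hF, hs2, ht] using this
        · simp [hs2, ht]
    · rintro h ⟨i, b⟩ hk
      have hiT : i ∈ T := Finset.mem_image_of_mem Prod.fst hk
      rcases h i hiT with ⟨h1, h2⟩
      cases b
      · simpa [hF, hs1, hk] using h1
      · simpa [hF, hs2, hk] using h2
  have hfac : ∀ i, P ((fun ω => (A i ω, B i ω)) ⁻¹' (s1 i ×ˢ s2 i))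
      = P (A i ⁻¹' s1 i) * P (B i ⁻¹' s2 i) := by
    intro i
    have : (fun ω => (A i ω, B i ω)) ⁻¹' (s1 i ×ˢ s2 i) = A i ⁻¹' s1 i ∩ B i ⁻¹' s2 i := by
      ext ω; simp [Set.mem_prod]
    rw [this, (hAB i).measure_inter_preimage_eq_mul _ _ (hs1M i) (hs2M i)]
  have hPA : ∀ i, P (A i ⁻¹' s1 i) = if (i, false) ∈ S then P (F (i, false) ⁻¹' sets (i, false)) else 1 := by
    intro i; by_cases h : (i, false) ∈ S <;> simp [hs1, hF, h]
  have hPB : ∀ i, P (B i ⁻¹' s2 i) = if (i, true) ∈ S then P (F (i, true) ⁻¹' sets (i, true)) else 1 := by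
    intro i; by_cases h : (i, true) ∈ S <;> simp [hs2, hF, h]
  rw [hI, hpairs.measure_inter_preimage_eq_mul T
      (sets := fun i => s1 i ×ˢ s2 i) (fun i _ => (hs1M i).prod (hs2M i))]
  -- now the product side
  rw [← Finset.prod_fiberwise_of_maps_to (g := Prod.fst) (fun k hk => Finset.mem_image_of_mem _ hk)
      (fun k => P (F k ⁻¹' sets k))]
  refine Finset.prod_congr rfl fun i _ => ?_
  have hfib : S.filter (fun k => k.1 = i) = ({(i, false), (i, true)} : Finset (ι × Bool)).filter (· ∈ S) := by
    ext ⟨a, b⟩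
    simp only [Finset.mem_filter, Finset.mem_insert, Finset.mem_singleton]
    constructor
    · rintro ⟨hmem, rfl⟩
      cases b
      · exact ⟨Or.inl rfl, hmem⟩
      · exact ⟨Or.inr rfl, hmem⟩
    · rintro ⟨h1 | h1, hmem⟩ <;> simp only [Prod.ext_iff] at h1 <;> exact ⟨hmem, h1.1⟩
  rw [hfac i, hPA i, hPB i, hfib, Finset.prod_filter,
    Finset.prod_pair (by simp : ((i, false) : ι × Bool) ≠ (i, true))]


lemma aux_pi [IsProbabilityMeasure P] (X : ι → Ω → ℝ)
    (hX : ∀ i, Measurable (X i))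
    (hXi : iIndepFun X P)
    {m : ℕ} (e : Fin m → ι) (he : Function.Injective e) :
    Measure.map (fun ω (j : Fin m) => X (e j) ω) P
      = Measure.pi (fun j => Measure.map (X (e j)) P) := by
  classical
  refine (Measure.pi_eq fun s hs => ?_).symm
  rw [Measure.map_apply (measurable_pi_lambda _ fun j => hX (e j)) (MeasurableSet.univ_pi hs)]
  set sets : ι → Set ℝ := fun k => if h : ∃ j, e j = k then s h.choose else Set.univ with hsets
  have hse : ∀ j, sets (e j) = s j := by
    intro j
    have h : ∃ j', e j' = e j := ⟨j, rfl⟩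
    simp only [hsets, dif_pos h]
    exact congrArg s (he h.choose_spec)
  have hI : (fun ω (j : Fin m) => X (e j) ω) ⁻¹' (Set.pi Set.univ s)
      = ⋂ k ∈ (Finset.univ.image e : Finset ι), X k ⁻¹' sets k := by
    ext ω
    simp only [Set.mem_preimage, Set.mem_pi, Set.mem_univ, forall_true_left, Set.mem_iInter,
      Finset.mem_image, Finset.mem_univ, true_and]
    constructor
    · rintro h k ⟨j, _, rfl⟩
      rw [hse]; exact h j
    · intro h j
      have := h (e j) ⟨j, by simp⟩
      rwa [hse] at this
  rw [hI, hXi.measure_inter_preimage_eq_mul _ (fun k hk => ?_)]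
  · rw [Finset.prod_image (fun a _ b _ h => he h)]
    refine Finset.prod_congr rfl fun j _ => ?_
    rw [hse, Measure.map_apply (hX _) (hs j)]
  · obtain ⟨j, -, rfl⟩ := Finset.mem_image.1 hk
    rw [hse]; exact hs j

lemma aux_event [IsProbabilityMeasure P] (X : ι → Ω → ℝ)
    (hX : ∀ i, Measurable (X i))
    (hXi : iIndepFun X P)
    (e f : ℕ → ι) (he : Function.Injective e) (hf : Function.Injective f)
    (hmarg : ∀ j, Measure.map (X (e j)) P = Measure.map (X (f j)) P)
    (m : ℕ) (B : Set (ℕ → ℝ)) (hB : MeasurableSet B)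
    (hBdep : ∀ x y : ℕ → ℝ, (∀ j, j < m → x j = y j) → x ∈ B → y ∈ B) :
    P ((fun ω (j : ℕ) => X (e j) ω) ⁻¹' B) = P ((fun ω (j : ℕ) => X (f j) ω) ⁻¹' B) := by
  set ext0 : (Fin m → ℝ) → (ℕ → ℝ) := fun y j => if h : j < m then y ⟨j, h⟩ else 0 with hext0
  have hext0M : Measurable ext0 := by
    refine measurable_pi_lambda _ fun j => ?_
    by_cases h : j < m
    · simp only [hext0, dif_pos h]; exact measurable_pi_apply _
    · simp only [hext0, dif_neg h]; exact measurable_const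
  set Bm : Set (Fin m → ℝ) := ext0 ⁻¹' B with hBm
  have hBmM : MeasurableSet Bm := hext0M hB
  have key : ∀ g : ℕ → ι, (fun ω (j : ℕ) => X (g j) ω) ⁻¹' B
      = (fun ω (j : Fin m) => X (g j) ω) ⁻¹' Bm := by
    intro g
    ext ω
    simp only [Set.mem_preimage, hBm, hext0]
    constructor
    · intro h
      refine hBdep _ _ (fun j hj => ?_) h
      simp [dif_pos hj]
    · intro h
      refine hBdep _ _ (fun j hj => ?_) h
      simp [dif_pos hj]
  rw [key e, key f,
    ← Measure.map_apply (measurable_pi_lambda (fun ω (j : Fin m) => X (e ↑j) ω) fun j => hX (e ↑j)) hBmM,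
    ← Measure.map_apply (measurable_pi_lambda (fun ω (j : Fin m) => X (f ↑j) ω) fun j => hX (f ↑j)) hBmM,
    aux_pi X hX hXi (fun j : Fin m => e j) (he.comp Fin.val_injective),
    aux_pi X hX hXi (fun j : Fin m => f j) (hf.comp Fin.val_injective)]
  have : (fun j : Fin m => Measure.map (X (e ↑j)) P) = fun j : Fin m => Measure.map (X (f ↑j)) P :=
    funext fun j => hmarg j
  rw [this]


lemma aux_limit (P : Measure Ω) [IsFiniteMeasure P] (A B : ℕ → Set Ω)
    (hA : ∀ n, MeasurableSet (A n)) (hB : ∀ n, MeasurableSet (B n))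
    (hAanti : Antitone A) (hBanti : Antitone B) (k : ℕ)
    (h : ∀ n, P (A n) = P (B (n + k))) :
    P (⋂ n, A n) = P (⋂ n, B n) := by
  have h1 : Tendsto (fun n => P (A n)) atTop (nhds (P (⋂ n, A n))) :=
    tendsto_measure_iInter_atTop (fun n => (hA n).nullMeasurableSet) hAanti
      ⟨0, measure_ne_top _ _⟩
  have h2 : Tendsto (fun n => P (B n)) atTop (nhds (P (⋂ n, B n))) :=
    tendsto_measure_iInter_atTop (fun n => (hB n).nullMeasurableSet) hBanti
      ⟨0, measure_ne_top _ _⟩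
  have h2' : Tendsto (fun n => P (B (n + k))) atTop (nhds (P (⋂ n, B n))) :=
    h2.comp (tendsto_add_atTop_nat k)
  have : (fun n => P (A n)) = fun n => P (B (n + k)) := funext h
  rw [this] at h1
  exact tendsto_nhds_unique h1 h2'

lemma aux_integral (P : Measure Ω) [IsProbabilityMeasure P] (W : Ω → ℝ) (hW : Measurable W)
    (T : ℕ → Ω → ℝ) (hT : ∀ i, Measurable (T i))
    (hind : IndepFun W (fun ω (i : ℕ) => T i ω) P) (u : ℝ) :
    ∫ ω, (P {ω' | ∀ i : ℕ, 0 ≤ u + W ω + T i ω'}).toReal ∂P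
      = (P {ω | ∀ i : ℕ, 0 ≤ u + W ω + T i ω}).toReal := by
  have hTvec : Measurable (fun ω (i : ℕ) => T i ω) := measurable_pi_lambda _ hT
  haveI : IsProbabilityMeasure (P.map (fun ω (i : ℕ) => T i ω)) :=
    Measure.isProbabilityMeasure_map hTvec.aemeasurable
  haveI : IsProbabilityMeasure (P.map W) := Measure.isProbabilityMeasure_map hW.aemeasurable
  set η : Measure (ℕ → ℝ) := P.map (fun ω (i : ℕ) => T i ω) with hη
  set A : Set (ℝ × (ℕ → ℝ)) := {p | ∀ i, 0 ≤ u + p.1 + p.2 i} with hAdef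
  have hA : MeasurableSet A := by
    have : A = ⋂ i, {p : ℝ × (ℕ → ℝ) | 0 ≤ u + p.1 + p.2 i} := by
      ext p; simp [hAdef]
    rw [this]
    exact MeasurableSet.iInter fun i => measurableSet_le measurable_const
      ((measurable_const.add measurable_fst).add ((measurable_pi_apply i).comp measurable_snd))
  have hmap : P.map (fun ω => (W ω, fun i => T i ω)) = (P.map W).prod η :=
    (indepFun_iff_map_prod_eq_prod_map_map hW.aemeasurable hTvec.aemeasurable).1 hind
  have hRHS : P {ω | ∀ i : ℕ, 0 ≤ u + W ω + T i ω} = ((P.map W).prod η) A := by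
    rw [← hmap, Measure.map_apply (hW.prodMk hTvec) hA]
    rfl
  have hslice : ∀ v : ℝ, η (Prod.mk v ⁻¹' A) = P {ω' | ∀ i, 0 ≤ u + v + T i ω'} := by
    intro v
    rw [hη, Measure.map_apply hTvec (measurable_prodMk_left hA)]
    rfl
  have hmeasG : Measurable fun v : ℝ => η (Prod.mk v ⁻¹' A) :=
    measurable_measure_prodMk_left hA
  have hprod : ((P.map W).prod η) A = ∫⁻ v, η (Prod.mk v ⁻¹' A) ∂(P.map W) :=
    Measure.prod_apply hA
  calc ∫ ω, (P {ω' | ∀ i : ℕ, 0 ≤ u + W ω + T i ω'}).toReal ∂P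
      = ∫ v, (η (Prod.mk v ⁻¹' A)).toReal ∂(P.map W) := by
        rw [integral_map hW.aemeasurable
          (hmeasG.ennreal_toReal.aestronglyMeasurable)]
        refine integral_congr_ae (Filter.Eventually.of_forall fun ω => ?_)
        simp only [hslice (W ω)]
    _ = (∫⁻ v, η (Prod.mk v ⁻¹' A) ∂(P.map W)).toReal := by
        refine integral_toReal hmeasG.aemeasurable ?_
        exact Filter.Eventually.of_forall fun v => measure_lt_top _ _
    _ = (P {ω | ∀ i : ℕ, 0 ≤ u + W ω + T i ω}).toReal := by rw [hRHS, hprod]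

end Aux

/-- survival probabilities under continuous and Poisson observation:
φ̂(u) = E[φ(u+U)] and φ(u) = E[φ̂(u+D)]. -/
theorem survival_probability_relations {Ω : Type*} [MeasurableSpace Ω] (P : Measure Ω)
    [IsProbabilityMeasure P]
    (D U : ℕ → Ω → ℝ) (D' U' : Ω → ℝ)
    (hDmeas : ∀ i, Measurable (D i)) (hUmeas : ∀ i, Measurable (U i))
    (hD'meas : Measurable D') (hU'meas : Measurable U')
    (hindep : iIndepFun (fun i ω => (D i ω, U i ω)) P)
    (hpairindep : ∀ i, IndepFun (D i) (U i) P)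
    (hident : ∀ i, IdentDistrib (fun ω => (D i ω, U i ω)) (fun ω => (D 0 ω, U 0 ω)) P P)
    (hDneg : ∀ i ω, D i ω ≤ 0) (hUpos : ∀ i ω, 0 ≤ U i ω)
    (hD'U'indep : IndepFun D' U' P)
    (hcopiesindep : IndepFun (fun ω => (D' ω, U' ω)) (fun ω => fun i => (D i ω, U i ω)) P)
    (hD'ident : IdentDistrib D' (D 0) P P) (hU'ident : IdentDistrib U' (U 0) P P)
    (Shat S : ℕ → Ω → ℝ)
    (hShat : ∀ i ω, Shat i ω = ∑ j ∈ Finset.range i, (D j ω + U j ω))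
    (hS : ∀ i ω, S i ω = D 0 ω + ∑ j ∈ Finset.range i, (U j ω + D (j + 1) ω))
    (φ φhat : ℝ → ℝ)
    (hφ : ∀ u : ℝ, φ u = (P {ω | ∀ i : ℕ, 0 ≤ u + S i ω}).toReal)
    (hφhat : ∀ u : ℝ, φhat u = (P {ω | ∀ i : ℕ, 0 ≤ u + Shat i ω}).toReal) :
    ∀ u : ℝ, 0 ≤ u →
      φhat u = ∫ ω, φ (u + U' ω) ∂P ∧ φ u = ∫ ω, φhat (u + D' ω) ∂P := by
  classical
  intro u hu
  -- measurability of S and Shat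
  have hSmeas : ∀ i, Measurable (S i) := by
    intro i
    have h : S i = fun ω => D 0 ω + ∑ j ∈ Finset.range i, (U j ω + D (j + 1) ω) :=
      funext (hS i)
    rw [h]
    exact (hDmeas 0).add (Finset.measurable_sum _ fun j _ => (hUmeas j).add (hDmeas (j + 1)))
  have hShatmeas : ∀ i, Measurable (Shat i) := by
    intro i
    have h : Shat i = fun ω => ∑ j ∈ Finset.range i, (D j ω + U j ω) := funext (hShat i)
    rw [h]
    exact Finset.measurable_sum _ fun j _ => (hDmeas j).add (hUmeas j)
  -- the flattened independent family
  set DD : Option ℕ → Ω → ℝ := fun o => Option.elim o D' D with hDDdef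
  set UU : Option ℕ → Ω → ℝ := fun o => Option.elim o U' U with hUUdef
  have hDDm : ∀ o, Measurable (DD o) := by rintro (_ | i); exacts [hD'meas, hDmeas i]
  have hUUm : ∀ o, Measurable (UU o) := by rintro (_ | i); exacts [hU'meas, hUmeas i]
  have hpairO : iIndepFun
      (fun o : Option ℕ => Option.elim o (fun ω => (D' ω, U' ω)) (fun i ω => (D i ω, U i ω))) P :=
    aux_option _ _ (fun i => (hDmeas i).prodMk (hUmeas i)) hindep hcopiesindep
  have hpairO' : iIndepFun (fun o : Option ℕ => fun ω => (DD o ω, UU o ω)) P := by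
    have h : (fun o : Option ℕ => fun ω => (DD o ω, UU o ω))
        = fun o : Option ℕ => Option.elim o (fun ω => (D' ω, U' ω)) (fun i ω => (D i ω, U i ω)) := by
      funext o ω; cases o <;> rfl
    rw [h]; exact hpairO
  have hABo : ∀ o : Option ℕ, IndepFun (DD o) (UU o) P := by
    rintro (_ | i); exacts [hD'U'indep, hpairindep i]
  have hξi : iIndepFun
      (fun k : Option ℕ × Bool => if k.2 then UU k.1 else DD k.1) P :=
    aux_split DD UU hDDm hUUm hpairO' hABo
  set ξ : Option ℕ × Bool → Ω → ℝ := fun k => if k.2 then UU k.1 else DD k.1 with hξdef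
  have hξm : ∀ k, Measurable (ξ k) := by
    rintro ⟨o, b⟩; cases b
    · exact hDDm o
    · exact hUUm o
  have hξDs : ∀ i, ξ (some i, false) = D i := fun i => rfl
  have hξUs : ∀ i, ξ (some i, true) = U i := fun i => rfl
  have hξD' : ξ (none, false) = D' := rfl
  have hξU' : ξ (none, true) = U' := rfl
  -- laws
  have hDlaw : ∀ i, Measure.map (D i) P = Measure.map (D 0) P := by
    intro i
    have h2 : IdentDistrib (D i) (D 0) P P := by
      have := (hident i).comp (measurable_fst : Measurable (Prod.fst : ℝ × ℝ → ℝ))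
      simpa [Function.comp_def] using this
    exact h2.map_eq
  have hUlaw : ∀ i, Measure.map (U i) P = Measure.map (U 0) P := by
    intro i
    have h2 : IdentDistrib (U i) (U 0) P P := by
      have := (hident i).comp (measurable_snd : Measurable (Prod.snd : ℝ × ℝ → ℝ))
      simpa [Function.comp_def] using this
    exact h2.map_eq
  have hlaw : ∀ k : Option ℕ × Bool,
      Measure.map (ξ k) P = if k.2 then Measure.map (U 0) P else Measure.map (D 0) P := by
    rintro ⟨(_ | i), (_ | _)⟩
    · simpa [hξD'] using hD'ident.map_eq
    · simpa [hξU'] using hU'ident.map_eq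
    · simpa [hξDs] using hDlaw i
    · simpa [hξUs] using hUlaw i
  -- injections
  set e1 : ℕ → Option ℕ × Bool := fun j => if j % 2 = 0 then (some (j / 2), false)
      else (if j / 2 = 0 then (none, true) else (some (j / 2 - 1), true)) with he1def
  set f1 : ℕ → Option ℕ × Bool := fun j => if j % 2 = 0 then (some (j / 2), false)
      else (some (j / 2), true) with hf1def
  set f2 : ℕ → Option ℕ × Bool := fun j => if j % 2 = 0
      then (if j / 2 = 0 then (none, false) else (some (j / 2 - 1), false))
      else (some (j / 2), true) with hf2def
  have he1inj : Function.Injective e1 := by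
    intro a b hab
    by_cases pa : a % 2 = 0 <;> by_cases pb : b % 2 = 0 <;>
      by_cases qa : a / 2 = 0 <;> by_cases qb : b / 2 = 0 <;>
      simp [he1def, pa, pb, qa, qb, Prod.ext_iff, -Nat.div_eq_zero_iff] at hab <;> omega
  have hf1inj : Function.Injective f1 := by
    intro a b hab
    by_cases pa : a % 2 = 0 <;> by_cases pb : b % 2 = 0 <;>
      simp [hf1def, pa, pb, Prod.ext_iff] at hab <;> omega
  have hf2inj : Function.Injective f2 := by
    intro a b hab
    by_cases pa : a % 2 = 0 <;> by_cases pb : b % 2 = 0 <;>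
      by_cases qa : a / 2 = 0 <;> by_cases qb : b / 2 = 0 <;>
      simp [hf2def, pa, pb, qa, qb, Prod.ext_iff, -Nat.div_eq_zero_iff] at hab <;> omega
  -- evaluation lemmas
  have he1_even : ∀ k, e1 (2 * k) = (some k, false) := by
    intro k
    have h1 : (2 * k) % 2 = 0 := by omega
    have h2 : (2 * k) / 2 = k := by omega
    simp [he1def, h1, h2]
  have he1_1 : e1 1 = (none, true) := by norm_num [he1def]
  have he1_odd : ∀ k, e1 (2 * (k + 1) + 1) = (some k, true) := by
    intro k
    have h1 : ¬((2 * (k + 1) + 1) % 2 = 0) := by omega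
    have h2 : (2 * (k + 1) + 1) / 2 = k + 1 := by omega
    simp [he1def, h1, h2]
  have hf1_even : ∀ k, f1 (2 * k) = (some k, false) := by
    intro k
    have h1 : (2 * k) % 2 = 0 := by omega
    have h2 : (2 * k) / 2 = k := by omega
    simp [hf1def, h1, h2]
  have hf1_odd : ∀ k, f1 (2 * k + 1) = (some k, true) := by
    intro k
    have h1 : ¬((2 * k + 1) % 2 = 0) := by omega
    have h2 : (2 * k + 1) / 2 = k := by omega
    simp [hf1def, h1, h2]
  have hf2_0 : f2 0 = (none, false) := by norm_num [hf2def]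
  have hf2_even : ∀ k, f2 (2 * (k + 1)) = (some k, false) := by
    intro k
    have h1 : (2 * (k + 1)) % 2 = 0 := by omega
    have h2 : (2 * (k + 1)) / 2 = k + 1 := by omega
    simp [hf2def, h1, h2, -Nat.div_eq_zero_iff]
  have hf2_odd : ∀ k, f2 (2 * k + 1) = (some k, true) := by
    intro k
    have h1 : ¬((2 * k + 1) % 2 = 0) := by omega
    have h2 : (2 * k + 1) / 2 = k := by omega
    simp [hf2def, h1, h2]
  -- sum identities
  have hsum_e1 : ∀ (i : ℕ) (ω : Ω), ∑ j ∈ Finset.range (2 * (i + 1)), ξ (e1 j) ω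
      = U' ω + S i ω := by
    intro i ω
    induction i with
    | zero =>
      rw [show 2 * (0 + 1) = 0 + 1 + 1 by ring, Finset.sum_range_succ, Finset.sum_range_succ,
        Finset.sum_range_zero]
      have h0 : e1 0 = (some 0, false) := by simpa using he1_even 0
      rw [h0, he1_1, hξDs, hξU', hS 0]
      simp; ring
    | succ n ih =>
      rw [show 2 * (n + 1 + 1) = (2 * (n + 1)) + 1 + 1 by ring, Finset.sum_range_succ,
        Finset.sum_range_succ, ih, he1_odd n, he1_even (n + 1), hξDs, hξUs,
        hS n, hS (n + 1), Finset.sum_range_succ]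
      ring
  have hsum_f1_even : ∀ (i : ℕ) (ω : Ω), ∑ j ∈ Finset.range (2 * i), ξ (f1 j) ω = Shat i ω := by
    intro i ω
    induction i with
    | zero => rw [hShat 0]; simp
    | succ n ih =>
      rw [show 2 * (n + 1) = (2 * n) + 1 + 1 by ring, Finset.sum_range_succ,
        Finset.sum_range_succ, ih, hf1_odd n, hf1_even n, hξDs, hξUs,
        hShat n, hShat (n + 1), Finset.sum_range_succ]
      ring
  have hsum_f1_odd : ∀ (i : ℕ) (ω : Ω), ∑ j ∈ Finset.range (2 * i + 1), ξ (f1 j) ω = S i ω := by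
    intro i ω
    induction i with
    | zero =>
      rw [show 2 * 0 + 1 = 0 + 1 by ring, Finset.sum_range_succ, Finset.sum_range_zero]
      have h0 : f1 0 = (some 0, false) := by simpa using hf1_even 0
      rw [h0, hξDs, hS 0]
      simp
    | succ n ih =>
      rw [show 2 * (n + 1) + 1 = (2 * n + 1) + 1 + 1 by ring, Finset.sum_range_succ,
        Finset.sum_range_succ, ih, hf1_odd n,
        show 2 * n + 1 + 1 = 2 * (n + 1) by ring, hf1_even (n + 1), hξDs, hξUs,
        hS n, hS (n + 1), Finset.sum_range_succ]
      ring
  have hsum_f2 : ∀ (i : ℕ) (ω : Ω), ∑ j ∈ Finset.range (2 * i + 1), ξ (f2 j) ω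
      = D' ω + Shat i ω := by
    intro i ω
    induction i with
    | zero =>
      rw [show 2 * 0 + 1 = 0 + 1 by ring, Finset.sum_range_succ, Finset.sum_range_zero,
        hf2_0, hξD', hShat 0]
      simp
    | succ n ih =>
      rw [show 2 * (n + 1) + 1 = (2 * n + 1) + 1 + 1 by ring, Finset.sum_range_succ,
        Finset.sum_range_succ, ih, hf2_odd n,
        show 2 * n + 1 + 1 = 2 * (n + 1) by ring, hf2_even n, hξDs, hξUs,
        hShat n, hShat (n + 1), Finset.sum_range_succ]
      ring
  -- marginal matching
  have hmarg1 : ∀ j, Measure.map (ξ (e1 j)) P = Measure.map (ξ (f1 j)) P := by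
    intro j
    rw [hlaw, hlaw]
    by_cases h : j % 2 = 0
    · simp [he1def, hf1def, h]
    · by_cases h2 : j / 2 = 0 <;> simp [he1def, hf1def, h, h2, -Nat.div_eq_zero_iff]
  have hmarg2 : ∀ j, Measure.map (ξ (f1 j)) P = Measure.map (ξ (f2 j)) P := by
    intro j
    rw [hlaw, hlaw]
    by_cases h : j % 2 = 0
    · by_cases h2 : j / 2 = 0 <;> simp [hf1def, hf2def, h, h2, -Nat.div_eq_zero_iff]
    · simp [hf1def, hf2def, h]
  -- generic measurability of truncated events
  have hmeasA : ∀ (g : Ω → ℝ), Measurable g → ∀ (V : ℕ → Ω → ℝ), (∀ i, Measurable (V i)) →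
      ∀ n : ℕ, MeasurableSet {ω | ∀ i ≤ n, 0 ≤ u + g ω + V i ω} := by
    intro g hg V hV n
    have h : {ω | ∀ i ≤ n, 0 ≤ u + g ω + V i ω}
        = ⋂ i, ⋂ (_ : i ≤ n), {ω | 0 ≤ u + g ω + V i ω} := by
      ext ω; simp
    rw [h]
    exact MeasurableSet.iInter fun i => MeasurableSet.iInter fun _ =>
      measurableSet_le measurable_const ((measurable_const.add hg).add (hV i))
  have hmeasA0 : ∀ (V : ℕ → Ω → ℝ), (∀ i, Measurable (V i)) →
      ∀ n : ℕ, MeasurableSet {ω | ∀ i ≤ n, 0 ≤ u + V i ω} := by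
    intro V hV n
    have h : {ω | ∀ i ≤ n, 0 ≤ u + V i ω}
        = ⋂ i, ⋂ (_ : i ≤ n), {ω | 0 ≤ u + V i ω} := by
      ext ω; simp
    rw [h]
    exact MeasurableSet.iInter fun i => MeasurableSet.iInter fun _ =>
      measurableSet_le measurable_const (measurable_const.add (hV i))
  -- claim 1 core
  have core1 : P {ω | ∀ i : ℕ, 0 ≤ u + U' ω + S i ω} = P {ω | ∀ i : ℕ, 0 ≤ u + Shat i ω} := by
    have hAI : {ω | ∀ i : ℕ, 0 ≤ u + U' ω + S i ω}
        = ⋂ n, {ω | ∀ i ≤ n, 0 ≤ u + U' ω + S i ω} := by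
      ext ω
      simp only [Set.mem_iInter, Set.mem_setOf_eq]
      exact ⟨fun h n i _ => h i, fun h i => h i i le_rfl⟩
    have hBI : {ω | ∀ i : ℕ, 0 ≤ u + Shat i ω}
        = ⋂ n, {ω | ∀ i ≤ n, 0 ≤ u + Shat i ω} := by
      ext ω
      simp only [Set.mem_iInter, Set.mem_setOf_eq]
      exact ⟨fun h n i _ => h i, fun h i => h i i le_rfl⟩
    rw [hAI, hBI]
    refine aux_limit P _ _ (hmeasA U' hU'meas S hSmeas) (hmeasA0 Shat hShatmeas)
      (fun m n hmn ω hω i hi => hω i (hi.trans hmn))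
      (fun m n hmn ω hω i hi => hω i (hi.trans hmn)) 1 ?_
    intro n
    set Bset : Set (ℕ → ℝ) :=
      {x | ∀ i ≤ n + 1, 0 ≤ u + ∑ j ∈ Finset.range (2 * i), x j} with hBsetdef
    have hBm : MeasurableSet Bset := by
      have h : Bset = ⋂ i, ⋂ (_ : i ≤ n + 1),
          {x : ℕ → ℝ | 0 ≤ u + ∑ j ∈ Finset.range (2 * i), x j} := by
        ext x; simp [hBsetdef]
      rw [h]
      exact MeasurableSet.iInter fun i => MeasurableSet.iInter fun _ =>
        measurableSet_le measurable_const
          (measurable_const.add (Finset.measurable_sum _ fun j _ => measurable_pi_apply j))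
    have hA' : {ω | ∀ i ≤ n, 0 ≤ u + U' ω + S i ω} = (fun ω (j : ℕ) => ξ (e1 j) ω) ⁻¹' Bset := by
      ext ω
      simp only [Set.mem_setOf_eq, Set.mem_preimage, hBsetdef]
      constructor
      · intro h i hi
        match i with
        | 0 => simpa using hu
        | (i + 1) =>
          rw [hsum_e1 i ω]
          have := h i (by omega)
          linarith
      · intro h i hi
        have h2 := h (i + 1) (by omega)
        rw [hsum_e1 i ω] at h2
        linarith
    have hB' : {ω | ∀ i ≤ n + 1, 0 ≤ u + Shat i ω} = (fun ω (j : ℕ) => ξ (f1 j) ω) ⁻¹' Bset := by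
      ext ω
      simp only [Set.mem_setOf_eq, Set.mem_preimage, hBsetdef]
      constructor
      · intro h i hi
        rw [hsum_f1_even i ω]
        exact h i hi
      · intro h i hi
        have h2 := h i hi
        rwa [hsum_f1_even i ω] at h2
    rw [hA', hB']
    refine aux_event ξ hξm hξi e1 f1 he1inj hf1inj hmarg1 (2 * n + 4) Bset hBm ?_
    intro x y hxy hx i hi
    have h : ∑ j ∈ Finset.range (2 * i), y j = ∑ j ∈ Finset.range (2 * i), x j :=
      Finset.sum_congr rfl fun j hj => (hxy j (by simp only [Finset.mem_range] at hj; omega)).symm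
    rw [h]
    exact hx i hi
  -- claim 2 core
  have core2 : P {ω | ∀ i : ℕ, 0 ≤ u + S i ω} = P {ω | ∀ i : ℕ, 0 ≤ u + D' ω + Shat i ω} := by
    have hAI : {ω | ∀ i : ℕ, 0 ≤ u + S i ω} = ⋂ n, {ω | ∀ i ≤ n, 0 ≤ u + S i ω} := by
      ext ω
      simp only [Set.mem_iInter, Set.mem_setOf_eq]
      exact ⟨fun h n i _ => h i, fun h i => h i i le_rfl⟩
    have hBI : {ω | ∀ i : ℕ, 0 ≤ u + D' ω + Shat i ω}
        = ⋂ n, {ω | ∀ i ≤ n, 0 ≤ u + D' ω + Shat i ω} := by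
      ext ω
      simp only [Set.mem_iInter, Set.mem_setOf_eq]
      exact ⟨fun h n i _ => h i, fun h i => h i i le_rfl⟩
    rw [hAI, hBI]
    refine aux_limit P _ _ (hmeasA0 S hSmeas) (hmeasA D' hD'meas Shat hShatmeas)
      (fun m n hmn ω hω i hi => hω i (hi.trans hmn))
      (fun m n hmn ω hω i hi => hω i (hi.trans hmn)) 0 ?_
    intro n
    set Bset : Set (ℕ → ℝ) :=
      {x | ∀ i ≤ n, 0 ≤ u + ∑ j ∈ Finset.range (2 * i + 1), x j} with hBsetdef
    have hBm : MeasurableSet Bset := by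
      have h : Bset = ⋂ i, ⋂ (_ : i ≤ n),
          {x : ℕ → ℝ | 0 ≤ u + ∑ j ∈ Finset.range (2 * i + 1), x j} := by
        ext x; simp [hBsetdef]
      rw [h]
      exact MeasurableSet.iInter fun i => MeasurableSet.iInter fun _ =>
        measurableSet_le measurable_const
          (measurable_const.add (Finset.measurable_sum _ fun j _ => measurable_pi_apply j))
    have hA' : {ω | ∀ i ≤ n, 0 ≤ u + S i ω} = (fun ω (j : ℕ) => ξ (f1 j) ω) ⁻¹' Bset := by
      ext ω
      simp only [Set.mem_setOf_eq, Set.mem_preimage, hBsetdef]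
      constructor
      · intro h i hi
        rw [hsum_f1_odd i ω]
        exact h i hi
      · intro h i hi
        have h2 := h i hi
        rwa [hsum_f1_odd i ω] at h2
    have hB' : {ω | ∀ i ≤ n, 0 ≤ u + D' ω + Shat i ω}
        = (fun ω (j : ℕ) => ξ (f2 j) ω) ⁻¹' Bset := by
      ext ω
      simp only [Set.mem_setOf_eq, Set.mem_preimage, hBsetdef]
      constructor
      · intro h i hi
        rw [hsum_f2 i ω]
        have := h i hi
        linarith
      · intro h i hi
        have h2 := h i hi
        rw [hsum_f2 i ω] at h2
        linarith
    rw [show n + 0 = n from rfl, hA', hB']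
    refine aux_event ξ hξm hξi f1 f2 hf1inj hf2inj hmarg2 (2 * n + 4) Bset hBm ?_
    intro x y hxy hx i hi
    have h : ∑ j ∈ Finset.range (2 * i + 1), y j = ∑ j ∈ Finset.range (2 * i + 1), x j :=
      Finset.sum_congr rfl fun j hj => (hxy j (by simp only [Finset.mem_range] at hj; omega)).symm
    rw [h]
    exact hx i hi
  -- integral identities
  have hindS : IndepFun U' (fun ω (i : ℕ) => S i ω) P := by
    have h2 := hcopiesindep.comp (measurable_snd : Measurable (Prod.snd : ℝ × ℝ → ℝ))
      (measurable_pi_lambda (fun (g : ℕ → ℝ × ℝ) (i : ℕ) =>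
          (g 0).1 + ∑ j ∈ Finset.range i, ((g j).2 + (g (j + 1)).1))
        (fun i => ((measurable_pi_apply 0).fst).add
          (Finset.measurable_sum _ fun j _ =>
            ((measurable_pi_apply j).snd).add ((measurable_pi_apply (j + 1)).fst))))
    have heq : ((fun (g : ℕ → ℝ × ℝ) (i : ℕ) =>
        (g 0).1 + ∑ j ∈ Finset.range i, ((g j).2 + (g (j + 1)).1)) ∘
        (fun ω => fun i => (D i ω, U i ω))) = fun ω (i : ℕ) => S i ω := by
      funext ω i
      simp only [Function.comp_apply]
      exact (hS i ω).symm
    have heq2 : ((Prod.snd : ℝ × ℝ → ℝ) ∘ (fun ω => (D' ω, U' ω))) = U' := rfl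
    rwa [heq, heq2] at h2
  have hindShat : IndepFun D' (fun ω (i : ℕ) => Shat i ω) P := by
    have h2 := hcopiesindep.comp (measurable_fst : Measurable (Prod.fst : ℝ × ℝ → ℝ))
      (measurable_pi_lambda (fun (g : ℕ → ℝ × ℝ) (i : ℕ) =>
          ∑ j ∈ Finset.range i, ((g j).1 + (g j).2))
        (fun i => Finset.measurable_sum _ fun j _ =>
          ((measurable_pi_apply j).fst).add ((measurable_pi_apply j).snd)))
    have heq : ((fun (g : ℕ → ℝ × ℝ) (i : ℕ) =>
        ∑ j ∈ Finset.range i, ((g j).1 + (g j).2)) ∘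
        (fun ω => fun i => (D i ω, U i ω))) = fun ω (i : ℕ) => Shat i ω := by
      funext ω i
      simp only [Function.comp_apply]
      exact (hShat i ω).symm
    have heq2 : ((Prod.fst : ℝ × ℝ → ℝ) ∘ (fun ω => (D' ω, U' ω))) = D' := rfl
    rwa [heq, heq2] at h2
  have hint1 : ∫ ω, φ (u + U' ω) ∂P = (P {ω | ∀ i : ℕ, 0 ≤ u + U' ω + S i ω}).toReal := by
    rw [← aux_integral P U' hU'meas S hSmeas hindS u]
    refine integral_congr_ae (Filter.Eventually.of_forall fun ω => ?_)
    simp only [hφ]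
  have hint2 : ∫ ω, φhat (u + D' ω) ∂P
      = (P {ω | ∀ i : ℕ, 0 ≤ u + D' ω + Shat i ω}).toReal := by
    rw [← aux_integral P D' hD'meas Shat hShatmeas hindShat u]
    refine integral_congr_ae (Filter.Eventually.of_forall fun ω => ?_)
    simp only [hφhat]
  constructor
  · rw [hφhat, hint1, core1]
  · rw [hφ, hint2, core2]
end

section
/- Under the scale-function hypotheses (W_α continuous nonnegative with Laplace transform 1/ψ_α(θ) for θ > Φ_α, Z_α(u,θ) = ψ_α(θ)∫_0^∞ e^{-θy}W_α(u+y)dy for θ > Φ_α), for all u ≥ 0 and all μ > β > Φ_α: ∫_0^∞ Z_α(u+x, β) e^{-μx} dx = (1/(μ−β)) · ( Z_α(u,β) − (ψ_α(β)/ψ_α(μ)) · Z_α(u,μ) ). -/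
open MeasureTheory Set Filter Topology

/-- Laplace transform of x ↦ Z_α(u+x,β):
∫_0^∞ Z_α(u+x,β) e^{-μx} dx = (Z_α(u,β) − (ψ_α(β)/ψ_α(μ)) Z_α(u,μ))/(μ−β). -/
theorem laplace_transform_of_Z
    (ψ : ℝ → ℝ) (hconv : ConvexOn ℝ (Set.Ici 0) ψ) (hψ0 : ψ 0 = 0)
    (α : ℝ) (hα : 0 ≤ α) (ψα : ℝ → ℝ) (hψα : ∀ θ, ψα θ = ψ θ - α)
    (Φα : ℝ) (hΦα0 : 0 ≤ Φα) (hroot : ψα Φα = 0)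
    (hlargest : ∀ θ, 0 ≤ θ → ψα θ = 0 → θ ≤ Φα)
    (W : ℝ → ℝ) (hWcont : Continuous W) (hWpos : ∀ u, 0 ≤ W u) (hWmono : Monotone W)
    (hWint : ∀ θ > Φα, ∀ u ≥ (0:ℝ),
      IntegrableOn (fun y => Real.exp (-θ * y) * W (u + y)) (Set.Ioi 0))
    (hWlap : ∀ θ > Φα, ∫ u in Set.Ioi (0:ℝ), Real.exp (-θ * u) * W u = 1 / ψα θ)
    (Z : ℝ → ℝ → ℝ)
    (hZ : ∀ u ≥ (0:ℝ), ∀ θ > Φα,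
      Z u θ = ψα θ * ∫ y in Set.Ioi (0:ℝ), Real.exp (-θ * y) * W (u + y))
    (hZint : ∀ u ≥ (0:ℝ), ∀ β μ, Φα < β → β < μ →
      IntegrableOn (fun x => Z (u + x) β * Real.exp (-μ * x)) (Set.Ioi 0)) :
    ∀ u ≥ (0:ℝ), ∀ β μ, Φα < β → β < μ →
      ∫ x in Set.Ioi (0:ℝ), Z (u + x) β * Real.exp (-μ * x)
        = 1 / (μ - β) * (Z u β - ψα β / ψα μ * Z u μ) := by
  intro u hu β μ hβ hμ
  have hβ0 : (0:ℝ) ≤ β := hΦα0.trans hβ.le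
  have hμΦ : Φα < μ := hβ.trans hμ
  have hμ0 : (0:ℝ) ≤ μ := hΦα0.trans hμΦ.le
  have hψβ : ψα β ≠ 0 := fun h => absurd (hlargest β hβ0 h) (not_le.2 hβ)
  have hψμ : ψα μ ≠ 0 := fun h => absurd (hlargest μ hμ0 h) (not_le.2 hμΦ)
  have hμβ : 0 < μ - β := sub_pos.2 hμ
  set g : ℝ → ℝ := fun t => Real.exp (-β * t) * W (u + t) with hg_def
  have hgc : Continuous g := by
    exact (Real.continuous_exp.comp (continuous_const.mul continuous_id)).mul
      (hWcont.comp (continuous_const.add continuous_id))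
  have hgint : IntegrableOn g (Ioi 0) := hWint β hβ u hu
  have hgint2 : IntegrableOn (fun t => Real.exp (-μ * t) * W (u + t)) (Ioi 0) :=
    hWint μ hμΦ u hu
  set I : ℝ := ∫ t in Ioi (0:ℝ), g t with hI_def
  set G : ℝ → ℝ := fun x => I - ∫ t in (0:ℝ)..x, g t with hG_def
  -- derivative of G
  have hG_deriv : ∀ x : ℝ, HasDerivAt G (-(g x)) x := by
    intro x
    have h1 : HasDerivAt (fun x => ∫ t in (0:ℝ)..x, g t) (g x) x :=
      intervalIntegral.integral_hasDerivAt_right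
        (hgc.intervalIntegrable _ _)
        hgc.stronglyMeasurable.stronglyMeasurableAtFilter
        hgc.continuousAt
    have h2 := (hasDerivAt_const x I).sub h1
    rw [zero_sub] at h2
    exact h2
  have hGcont : Continuous G := by
    rw [continuous_iff_continuousAt]; exact fun x => (hG_deriv x).continuousAt
  -- tail representation of G
  have hG_tail : ∀ x : ℝ, 0 ≤ x → G x = ∫ t in Ioi x, g t := by
    intro x hx
    have hsplit : Ioc (0:ℝ) x ∪ Ioi x = Ioi 0 := Ioc_union_Ioi_eq_Ioi hx
    have hdisj : Disjoint (Ioc (0:ℝ) x) (Ioi x) := by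
      simp [Set.disjoint_left]
    have hi1 : IntegrableOn g (Ioc 0 x) := hgc.integrableOn_Ioc
    have hi2 : IntegrableOn g (Ioi x) := hgint.mono_set (Ioi_subset_Ioi hx)
    have := setIntegral_union hdisj measurableSet_Ioi hi1 hi2
    rw [hsplit] at this
    have hIoc : ∫ t in (0:ℝ)..x, g t = ∫ t in Ioc (0:ℝ) x, g t :=
      intervalIntegral.integral_of_le hx
    simp only [hG_def, hI_def, this, hIoc]
    ring
  -- G tends to 0 at infinity
  have hG_tendsto : Tendsto G atTop (𝓝 0) := by
    have h := intervalIntegral_tendsto_integral_Ioi 0 hgint tendsto_id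
    have h2 := Tendsto.const_sub I h
    have h3 : I - ∫ t in Ioi (0:ℝ), g t = 0 := by rw [← hI_def, sub_self]
    rw [h3] at h2
    exact h2
  -- translation identity
  have htrans : ∀ x : ℝ, 0 ≤ x → (∫ y in Ioi (0:ℝ), g (y + x)) = G x := by
    intro x hx
    rw [hG_tail x hx]
    rw [← integral_indicator measurableSet_Ioi, ← integral_indicator measurableSet_Ioi]
    rw [← integral_add_right_eq_self (fun t => (Ioi x).indicator g t) x]
    congr 1
    ext y
    by_cases hy : y ∈ Ioi (0:ℝ)
    · have : y + x ∈ Ioi x := by simpa using lt_add_of_pos_left x hy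
      simp [indicator_of_mem hy, indicator_of_mem this]
    · have : y + x ∉ Ioi x := by
        simp only [mem_Ioi, not_lt] at hy ⊢
        linarith
      simp [indicator_of_notMem hy, indicator_of_notMem this]
  -- pointwise identity for the integrand
  have hZeq : ∀ x ∈ Ioi (0:ℝ), Z (u + x) β * Real.exp (-μ * x)
      = ψα β * (Real.exp (-(μ - β) * x) * G x) := by
    intro x hx
    have hx0 : (0:ℝ) ≤ x := (mem_Ioi.1 hx).le
    have hux : (0:ℝ) ≤ u + x := by linarith
    rw [hZ (u + x) hux β hβ]
    have hinner : (∫ y in Ioi (0:ℝ), Real.exp (-β * y) * W (u + x + y))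
        = Real.exp (β * x) * G x := by
      rw [← htrans x hx0, ← integral_const_mul]
      apply setIntegral_congr_fun measurableSet_Ioi
      intro y _
      simp only [hg_def]
      have hexp : Real.exp (β * x) * Real.exp (-β * (y + x)) = Real.exp (-β * y) := by
        rw [← Real.exp_add]; congr 1; ring
      rw [show u + (y + x) = u + x + y by ring, ← mul_assoc, hexp]
    rw [hinner]
    have hexp : Real.exp (β * x) * Real.exp (-μ * x) = Real.exp (-(μ - β) * x) := by
      rw [← Real.exp_add]; congr 1; ring
    rw [← hexp]; ring
  -- the antiderivative
  set H : ℝ → ℝ := fun x => -Real.exp (-(μ - β) * x) / (μ - β) * G x with hH_def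
  set F : ℝ → ℝ := fun x =>
    Real.exp (-(μ - β) * x) * G x + Real.exp (-μ * x) * W (u + x) / (μ - β) with hF_def
  have hH_deriv : ∀ x ∈ Ioi (0:ℝ), HasDerivAt H (F x) x := by
    intro x _
    have hexp : Real.exp (-(μ - β) * x) * Real.exp (-β * x) = Real.exp (-μ * x) := by
      rw [← Real.exp_add]; congr 1; ring
    have h0 : HasDerivAt (fun x : ℝ => -(μ - β) * x) (-(μ - β)) x := by
      simpa using (hasDerivAt_id x).const_mul (-(μ - β))
    have he : HasDerivAt (fun x : ℝ => Real.exp (-(μ - β) * x))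
        (Real.exp (-(μ - β) * x) * -(μ - β)) x := h0.exp
    have hc : HasDerivAt (fun x => -Real.exp (-(μ - β) * x) / (μ - β))
        (Real.exp (-(μ - β) * x)) x := by
      have := (he.neg).div_const (μ - β)
      refine this.congr_deriv ?_
      rw [div_eq_iff hμβ.ne']
      ring
    have hprod := hc.mul (hG_deriv x)
    refine hprod.congr_deriv ?_
    simp only [hF_def, hg_def]
    rw [← hexp]
    ring
  have hHcont : ContinuousWithinAt H (Ici 0) 0 := by
    apply Continuous.continuousWithinAt
    exact ((Real.continuous_exp.comp (continuous_const.mul continuous_id)).neg.div_const _).mul hGcont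
  have hHtend : Tendsto H atTop (𝓝 0) := by
    have h1 : Tendsto (fun x : ℝ => -(μ - β) * x) atTop atBot :=
      Tendsto.const_mul_atTop_of_neg (by linarith) tendsto_id
    have hexp : Tendsto (fun x : ℝ => Real.exp (-(μ - β) * x)) atTop (𝓝 0) :=
      Real.tendsto_exp_atBot.comp h1
    have h2 : Tendsto (fun x => -Real.exp (-(μ - β) * x) / (μ - β)) atTop (𝓝 0) := by
      have := (hexp.neg).div_const (μ - β)
      simpa using this
    have h3 := h2.mul hG_tendsto
    simpa [hH_def] using h3
  have hint1 : IntegrableOn (fun x => Real.exp (-(μ - β) * x) * G x) (Ioi 0) := by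
    have hbase := (hZint u hu β μ hβ hμ).div_const (ψα β)
    refine IntegrableOn.congr_fun hbase (fun x hx => ?_) measurableSet_Ioi
    rw [hZeq x hx]
    field_simp
  have hFint : IntegrableOn F (Ioi 0) := hint1.add (hgint2.div_const _)
  have hkey := integral_Ioi_of_hasDerivAt_of_tendsto hHcont hH_deriv hFint hHtend
  have hsplit : ∫ x in Ioi (0:ℝ), F x
      = (∫ x in Ioi (0:ℝ), Real.exp (-(μ - β) * x) * G x)
        + (∫ x in Ioi (0:ℝ), Real.exp (-μ * x) * W (u + x)) / (μ - β) := by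
    rw [hF_def, ← integral_div]
    exact integral_add hint1 (hgint2.div_const _)
  have hH0 : H 0 = -(G 0) / (μ - β) := by simp [hH_def]; ring
  have hG0 : G 0 = I := by simp [hG_def]
  have hIβ : Z u β = ψα β * I := by
    simp only [hI_def, hg_def]
    exact hZ u hu β hβ
  have hIμ : (∫ x in Ioi (0:ℝ), Real.exp (-μ * x) * W (u + x)) = Z u μ / ψα μ := by
    rw [hZ u hu μ hμΦ]
    field_simp
  have hmain : (∫ x in Ioi (0:ℝ), Real.exp (-(μ - β) * x) * G x)
      = I / (μ - β) - (Z u μ / ψα μ) / (μ - β) := by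
    have h1 : ∫ x in Ioi (0:ℝ), F x = 0 - H 0 := hkey
    rw [hsplit, hIμ, hH0, hG0] at h1
    linear_combination h1
  have hLHS : ∫ x in Ioi (0:ℝ), Z (u + x) β * Real.exp (-μ * x)
      = ψα β * ∫ x in Ioi (0:ℝ), Real.exp (-(μ - β) * x) * G x := by
    rw [← integral_const_mul]
    exact setIntegral_congr_fun measurableSet_Ioi hZeq
  rw [hLHS, hmain, hIβ]
  field_simp
end

section
/- With the same hypotheses as in the previous item (E(e^{-αT^U}; U ∈ dy) = Φ_λ e^{-Φ_{λ+α}y} dy, scale functions W_α, Z_α with Z_α(u,θ) = ψ_α(θ)∫_0^∞ e^{-θy}W_α(u+y)dy for θ > Φ_α, and ψ_α(Φ_{λ+α}) = λ), for all u ≥ 0 and all β ≥ 0 with β ≠ Φ_{λ+α}: E[e^{-αT^U} Z_α(u+U, β)] = (Φ_λ/(Φ_{λ+α} − β)) · ( Z_α(u,β) − (ψ_α(β)/λ) Z_α(u, Φ_{λ+α}) ). -/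
open MeasureTheory Set

set_option maxHeartbeats 1600000

private lemma shift_int_iff (g : ℝ → ℝ) (v : ℝ) :
    MeasureTheory.IntegrableOn (fun y => g (y + v)) (Set.Ioi 0) ↔
      MeasureTheory.IntegrableOn g (Set.Ioi v) := by
  have hmp := MeasureTheory.measurePreserving_add_right (volume : Measure ℝ) v
  have hemb : MeasurableEmbedding (fun x : ℝ => x + v) :=
    (MeasurableEquiv.addRight v).measurableEmbedding
  have hpre : (fun x : ℝ => x + v) ⁻¹' (Set.Ioi v) = Set.Ioi 0 := by
    ext x; simp
  rw [← hpre]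
  exact hmp.integrableOn_comp_preimage hemb

private lemma shift_integral_eq (g : ℝ → ℝ) (v : ℝ) :
    ∫ y in Set.Ioi (0:ℝ), g (y + v) = ∫ y in Set.Ioi v, g y := by
  have hmp := MeasureTheory.measurePreserving_add_right (volume : Measure ℝ) v
  have hemb : MeasurableEmbedding (fun x : ℝ => x + v) :=
    (MeasurableEquiv.addRight v).measurableEmbedding
  have hpre : (fun x : ℝ => x + v) ⁻¹' (Set.Ioi v) = Set.Ioi 0 := by
    ext x; simp
  rw [← hpre]
  exact hmp.setIntegral_preimage_emb hemb g (Set.Ioi v)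


/-- second identity of Lemma 1:
E[e^{-αT^U} Z_α(u+U,β)] = (Φ_λ/(Φ_{λ+α}−β))(Z_α(u,β) − (ψ_α(β)/λ)Z_α(u,Φ_{λ+α})). -/
theorem lemma_WZ_second {Ω : Type*} [MeasurableSpace Ω] (P : Measure Ω)
    [IsProbabilityMeasure P]
    (T U : Ω → ℝ) (hT : Measurable T) (hU : Measurable U)
    (hTpos : ∀ ω, 0 ≤ T ω) (hUpos : ∀ ω, 0 ≤ U ω)
    (lam α Phil Philα Φα : ℝ) (hlam : 0 < lam) (hα : 0 ≤ α)
    (hPhil : 0 < Phil) (hPhilα : 0 < Philα) (hΦα : 0 ≤ Φα) (hΦorder : Φα < Philα)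
    (ψα : ℝ → ℝ) (hψ : ψα Philα = lam)
    (hdens : ∀ f : ℝ → ℝ, Measurable f →
      ∫ ω, Real.exp (-α * T ω) * f (U ω) ∂P
        = ∫ y in Set.Ioi (0:ℝ), Phil * Real.exp (-Philα * y) * f y)
    (W : ℝ → ℝ) (hWmeas : Measurable W) (hWcont : Continuous W) (hWpos : ∀ u, 0 ≤ W u)
    (Z : ℝ → ℝ → ℝ)
    (hZdef : ∀ u θ, Z u θ
      = Real.exp (θ * u) * (1 - ψα θ * ∫ y in (0:ℝ)..u, Real.exp (-θ * y) * W y))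
    (hZ : ∀ u ≥ (0:ℝ), ∀ θ > Φα,
      Z u θ = ψα θ * ∫ y in Set.Ioi (0:ℝ), Real.exp (-θ * y) * W (u + y)) :
    ∀ u ≥ (0:ℝ), ∀ β ≥ (0:ℝ), β ≠ Philα →
      ∫ ω, Real.exp (-α * T ω) * Z (u + U ω) β ∂P
        = Phil / (Philα - β) * (Z u β - ψα β / lam * Z u Philα) := by
  intro u hu β hβ hβne
  obtain ⟨θ, hθ1, hθ2⟩ : ∃ θ : ℝ, Φα < θ ∧ θ < Philα :=
    ⟨(Φα + Philα) / 2, by linarith, by linarith⟩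
  -- Step A: basic facts about  ∫_{Ioi 0} e^{-γ y} W y
  have key : ∀ γ > Φα, ψα γ * ∫ y in Set.Ioi (0:ℝ), Real.exp (-γ * y) * W y = 1 := by
    intro γ hγ
    have h1 := hZ 0 le_rfl γ hγ
    have h2 := hZdef 0 γ
    simp only [intervalIntegral.integral_same, mul_zero, sub_zero, Real.exp_zero, one_mul,
      mul_one, zero_add] at h1 h2
    rw [h2] at h1
    exact h1.symm
  have expW_int : ∀ γ > Φα,
      IntegrableOn (fun y => Real.exp (-γ * y) * W y) (Set.Ioi 0) := by
    intro γ hγ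
    by_contra h
    have := key γ hγ
    rw [integral_undef h] at this
    simp at this
  have intpos : ∀ γ > Φα, 0 ≤ ∫ y in Set.Ioi (0:ℝ), Real.exp (-γ * y) * W y := by
    intro γ hγ
    refine setIntegral_nonneg measurableSet_Ioi fun y _ => ?_
    exact mul_nonneg (Real.exp_nonneg _) (hWpos y)
  have ψpos : ∀ γ > Φα, 0 < ψα γ := by
    intro γ hγ
    have h1 := key γ hγ
    have h2 := intpos γ hγ
    nlinarith
  obtain ⟨C, hCdef⟩ : ∃ C : ℝ → ℝ, C = fun γ => ∫ y in Set.Ioi (0:ℝ), Real.exp (-γ * y) * W y :=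
    ⟨_, rfl⟩
  -- Step B: shifted integrability and bounds
  have shift_int : ∀ v ≥ (0:ℝ), ∀ γ > Φα,
      IntegrableOn (fun y => Real.exp (-γ * y) * W (v + y)) (Set.Ioi 0) := by
    intro v hv γ hγ
    have hgv : IntegrableOn (fun s => Real.exp (-γ * s) * W s) (Set.Ioi v) :=
      (expW_int γ hγ).mono_set (Ioi_subset_Ioi hv)
    have h1 : IntegrableOn (fun y => Real.exp (-γ * (y + v)) * W (y + v)) (Set.Ioi 0) :=
      (shift_int_iff (fun s => Real.exp (-γ * s) * W s) v).mpr hgv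
    have h2 : IntegrableOn (fun y => Real.exp (γ * v) * (Real.exp (-γ * (y + v)) * W (y + v)))
        (Set.Ioi 0) := h1.const_mul (Real.exp (γ * v))
    refine IntegrableOn.congr_fun h2 (fun y _ => ?_) measurableSet_Ioi
    rw [← mul_assoc, ← Real.exp_add, add_comm v y]
    ring_nf
  have shift_val : ∀ v ≥ (0:ℝ), ∀ γ > Φα,
      ∫ y in Set.Ioi (0:ℝ), Real.exp (-γ * y) * W (v + y) ≤ Real.exp (γ * v) * C γ := by
    intro v hv γ hγ
    have heq : ∫ y in Set.Ioi (0:ℝ), Real.exp (-γ * y) * W (v + y)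
        = Real.exp (γ * v) * ∫ y in Set.Ioi (0:ℝ), Real.exp (-γ * (y + v)) * W (y + v) := by
      rw [← integral_const_mul]
      refine setIntegral_congr_fun measurableSet_Ioi fun y _ => ?_
      rw [← mul_assoc, ← Real.exp_add, add_comm v y]
      ring_nf
    rw [heq]
    simp only [hCdef]
    rw [shift_integral_eq (fun s => Real.exp (-γ * s) * W s) v]
    have hle : ∫ s in Set.Ioi v, Real.exp (-γ * s) * W s
        ≤ ∫ s in Set.Ioi (0:ℝ), Real.exp (-γ * s) * W s := by
      refine setIntegral_mono_set (expW_int γ hγ) ?_ ?_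
      · filter_upwards with s using mul_nonneg (Real.exp_nonneg _) (hWpos s)
      · exact HasSubset.Subset.eventuallyLE (Ioi_subset_Ioi hv)
    exact mul_le_mul_of_nonneg_left hle (Real.exp_nonneg _)
  -- Step B': uniform exponential bound on Z · β
  have hCθpos : 0 < C θ := by
    simp only [hCdef]
    have h1 := key θ hθ1
    have h2 := ψpos θ hθ1
    have h3 := intpos θ hθ1
    nlinarith
  obtain ⟨K, hKdef⟩ : ∃ K : ℝ, K = 1 + |ψα β| * C θ := ⟨_, rfl⟩
  have hZb : ∀ v ≥ (0:ℝ), |Z v β| ≤ K * Real.exp (θ * v) := by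
    intro v hv
    rcases le_or_gt β θ with hcase | hcase
    · -- use hZdef
      have hA0 : 0 ≤ ∫ t in (0:ℝ)..v, Real.exp (-β * t) * W t :=
        intervalIntegral.integral_nonneg hv
          (fun t _ => mul_nonneg (Real.exp_nonneg _) (hWpos t))
      have hA1 : ∫ t in (0:ℝ)..v, Real.exp (-β * t) * W t
          ≤ ∫ t in (0:ℝ)..v, Real.exp ((θ - β) * v) * (Real.exp (-θ * t) * W t) := by
        refine intervalIntegral.integral_mono_on hv ?_ ?_ ?_
        · exact ((Real.continuous_exp.comp (continuous_const.mul continuous_id)).mul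
            hWcont).intervalIntegrable _ _
        · exact (continuous_const.mul ((Real.continuous_exp.comp
            (continuous_const.mul continuous_id)).mul hWcont)).intervalIntegrable _ _
        · intro t ht
          rw [← mul_assoc, ← Real.exp_add]
          have := hWpos t
          have hexple : Real.exp (-β * t) ≤ Real.exp ((θ - β) * v + -θ * t) := by
            apply Real.exp_le_exp.mpr
            nlinarith [ht.1, ht.2, sub_nonneg.mpr hcase]
          nlinarith [Real.exp_nonneg (-β * t)]
      have hA2 : ∫ t in (0:ℝ)..v, Real.exp ((θ - β) * v) * (Real.exp (-θ * t) * W t)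
          = Real.exp ((θ - β) * v) * ∫ t in (0:ℝ)..v, Real.exp (-θ * t) * W t :=
        intervalIntegral.integral_const_mul _ _
      have hA3 : ∫ t in (0:ℝ)..v, Real.exp (-θ * t) * W t ≤ C θ := by
        simp only [hCdef]
        rw [intervalIntegral.integral_of_le hv]
        refine setIntegral_mono_set (expW_int θ hθ1) ?_ ?_
        · filter_upwards with s using mul_nonneg (Real.exp_nonneg _) (hWpos s)
        · exact HasSubset.Subset.eventuallyLE Ioc_subset_Ioi_self
      have hA4 : ∫ t in (0:ℝ)..v, Real.exp (-β * t) * W t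
          ≤ Real.exp ((θ - β) * v) * C θ := by
        have h0 : 0 ≤ ∫ t in (0:ℝ)..v, Real.exp (-θ * t) * W t :=
          intervalIntegral.integral_nonneg hv
            (fun t _ => mul_nonneg (Real.exp_nonneg _) (hWpos t))
        calc ∫ t in (0:ℝ)..v, Real.exp (-β * t) * W t
            ≤ Real.exp ((θ - β) * v) * ∫ t in (0:ℝ)..v, Real.exp (-θ * t) * W t := by
              rw [← hA2]; exact hA1
          _ ≤ Real.exp ((θ - β) * v) * C θ := by
              exact mul_le_mul_of_nonneg_left hA3 (Real.exp_nonneg _)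
      rw [hZdef v β, abs_mul, Real.abs_exp]
      have habs : |1 - ψα β * ∫ t in (0:ℝ)..v, Real.exp (-β * t) * W t|
          ≤ 1 + |ψα β| * (Real.exp ((θ - β) * v) * C θ) := by
        refine (abs_sub _ _).trans ?_
        rw [abs_one, abs_mul]
        have : |∫ t in (0:ℝ)..v, Real.exp (-β * t) * W t|
            ≤ Real.exp ((θ - β) * v) * C θ := by
          rw [abs_of_nonneg hA0]; exact hA4
        nlinarith [abs_nonneg (ψα β)]
      calc Real.exp (β * v) * |1 - ψα β * ∫ t in (0:ℝ)..v, Real.exp (-β * t) * W t|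
          ≤ Real.exp (β * v) * (1 + |ψα β| * (Real.exp ((θ - β) * v) * C θ)) :=
            mul_le_mul_of_nonneg_left habs (Real.exp_nonneg _)
        _ = Real.exp (β * v) + |ψα β| * C θ * Real.exp (θ * v) := by
            rw [mul_add, mul_one]
            rw [show Real.exp (β * v) * (|ψα β| * (Real.exp ((θ - β) * v) * C θ))
              = |ψα β| * C θ * (Real.exp (β * v) * Real.exp ((θ - β) * v)) by ring,
              ← Real.exp_add]
            ring_nf
        _ ≤ K * Real.exp (θ * v) := by
            rw [hKdef]
            have h1 : Real.exp (β * v) ≤ Real.exp (θ * v) :=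
              Real.exp_le_exp.mpr (by nlinarith)
            nlinarith [Real.exp_nonneg (θ * v), abs_nonneg (ψα β), hCθpos]
    · -- β > θ > Φα  : use hZ
      have hβΦ : β > Φα := lt_trans hθ1 hcase
      have hZv := hZ v hv β hβΦ
      have hint1 := shift_int v hv β hβΦ
      have hint2 := shift_int v hv θ hθ1
      have hmono : ∫ y in Set.Ioi (0:ℝ), Real.exp (-β * y) * W (v + y)
          ≤ ∫ y in Set.Ioi (0:ℝ), Real.exp (-θ * y) * W (v + y) := by
        refine setIntegral_mono_on hint1 hint2 measurableSet_Ioi fun y hy => ?_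
        have hy0 : (0:ℝ) < y := hy
        have : Real.exp (-β * y) ≤ Real.exp (-θ * y) :=
          Real.exp_le_exp.mpr (by nlinarith)
        nlinarith [hWpos (v + y)]
      have hnn : 0 ≤ ∫ y in Set.Ioi (0:ℝ), Real.exp (-β * y) * W (v + y) :=
        setIntegral_nonneg measurableSet_Ioi fun y _ =>
          mul_nonneg (Real.exp_nonneg _) (hWpos _)
      have hZnn : 0 ≤ Z v β := by
        rw [hZv]; exact mul_nonneg (ψpos β hβΦ).le hnn
      rw [abs_of_nonneg hZnn, hZv]
      have hb := (shift_val v hv θ hθ1)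
      have hψβ := ψpos β hβΦ
      calc ψα β * ∫ y in Set.Ioi (0:ℝ), Real.exp (-β * y) * W (v + y)
          ≤ ψα β * (Real.exp (θ * v) * C θ) := by
            refine mul_le_mul_of_nonneg_left (hmono.trans hb) hψβ.le
        _ ≤ K * Real.exp (θ * v) := by
            have h1 : ψα β * (Real.exp (θ * v) * C θ)
                = (ψα β * C θ) * Real.exp (θ * v) := by ring
            rw [h1, hKdef]
            have h2 : ψα β * C θ ≤ 1 + |ψα β| * C θ := by
              have : ψα β ≤ |ψα β| := le_abs_self _
              nlinarith
            exact mul_le_mul_of_nonneg_right h2 (Real.exp_nonneg _)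
  -- Step C: continuity and the density identity
  have contβW : Continuous (fun t => Real.exp (-β * t) * W t) :=
    (Real.continuous_exp.comp (continuous_const.mul continuous_id)).mul hWcont
  have contPW : Continuous (fun t => Real.exp (-Philα * t) * W (u + t)) :=
    (Real.continuous_exp.comp (continuous_const.mul continuous_id)).mul
      (hWcont.comp (continuous_const.add continuous_id))
  have hprimcont : Continuous (fun v => ∫ t in (0:ℝ)..v, Real.exp (-β * t) * W t) :=
    continuous_iff_continuousAt.mpr fun v =>
      (contβW.integral_hasStrictDerivAt 0 v).hasDerivAt.continuousAt
  have hZcont : Continuous (fun v => Z v β) := by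
    have h : Continuous fun v =>
        Real.exp (β * v) * (1 - ψα β * ∫ t in (0:ℝ)..v, Real.exp (-β * t) * W t) :=
      (Real.continuous_exp.comp (continuous_const.mul continuous_id)).mul
        (continuous_const.sub (continuous_const.mul hprimcont))
    have heq : (fun v => Z v β) = fun v =>
        Real.exp (β * v) * (1 - ψα β * ∫ t in (0:ℝ)..v, Real.exp (-β * t) * W t) :=
      funext fun v => hZdef v β
    rw [heq]; exact h
  have hLHS := hdens (fun y => Z (u + y) β)
    ((hZcont.comp (continuous_const.add continuous_id)).measurable)
  -- Step D: an antiderivative for F x = e^{-Philα x} Z(u+x, β)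
  obtain ⟨F, hFdef⟩ : ∃ F : ℝ → ℝ, F = fun x => Real.exp (-Philα * x) * Z (u + x) β :=
    ⟨_, rfl⟩
  obtain ⟨Bi, hBidef⟩ : ∃ Bi : ℝ → ℝ,
      Bi = fun x => ∫ t in (0:ℝ)..x, Real.exp (-Philα * t) * W (u + t) := ⟨_, rfl⟩
  obtain ⟨H, hHdef⟩ : ∃ H : ℝ → ℝ,
      H = fun x => (F x + ψα β * Bi x) / (β - Philα) := ⟨_, rfl⟩
  have hβPhil : β - Philα ≠ 0 := sub_ne_zero.mpr hβne
  have hFeq : F = fun x => Real.exp ((β - Philα) * x + β * u)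
      * (1 - ψα β * ∫ t in (0:ℝ)..(u + x), Real.exp (-β * t) * W t) := by
    funext x
    simp only [hFdef]
    rw [hZdef (u + x) β, ← mul_assoc, ← Real.exp_add]
    ring_nf
  have hFcont : Continuous F := by
    rw [hFeq]
    exact (Real.continuous_exp.comp ((continuous_const.mul continuous_id).add
      continuous_const)).mul (continuous_const.sub (continuous_const.mul
        (hprimcont.comp (continuous_const.add continuous_id))))
  have hFderiv : ∀ x, HasDerivAt F
      ((β - Philα) * F x - ψα β * (Real.exp (-Philα * x) * W (u + x))) x := by
    intro x
    have h1 : HasDerivAt (fun x : ℝ => u + x) 1 x := (hasDerivAt_id x).const_add u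
    have h2 : HasDerivAt (fun x => ∫ t in (0:ℝ)..(u + x), Real.exp (-β * t) * W t)
        (Real.exp (-β * (u + x)) * W (u + x) * 1) x :=
      HasDerivAt.comp x ((contβW.integral_hasStrictDerivAt 0 (u + x)).hasDerivAt) h1
    have h3 : HasDerivAt (fun x => Real.exp ((β - Philα) * x + β * u))
        (Real.exp ((β - Philα) * x + β * u) * (β - Philα)) x := by
      simpa using (((hasDerivAt_id x).const_mul (β - Philα)).add_const (β * u)).exp
    have h4 : HasDerivAt
        (fun x => 1 - ψα β * ∫ t in (0:ℝ)..(u + x), Real.exp (-β * t) * W t)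
        (-(ψα β * (Real.exp (-β * (u + x)) * W (u + x) * 1))) x :=
      (h2.const_mul (ψα β)).const_sub 1
    have h5 := h3.mul h4
    rw [hFeq]
    refine h5.congr_deriv ?_
    have hexp : Real.exp ((β - Philα) * x + β * u) * Real.exp (-β * (u + x))
        = Real.exp (-Philα * x) := by
      rw [← Real.exp_add]; ring_nf
    beta_reduce
    linear_combination (-(ψα β * W (u + x))) * hexp
  have hBideriv : ∀ x, HasDerivAt Bi (Real.exp (-Philα * x) * W (u + x)) x := by
    intro x
    rw [hBidef]
    exact (contPW.integral_hasStrictDerivAt 0 x).hasDerivAt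
  have hHderiv : ∀ x, HasDerivAt H (F x) x := by
    intro x
    have h := ((hFderiv x).add ((hBideriv x).const_mul (ψα β))).div_const (β - Philα)
    rw [hHdef]
    refine h.congr_deriv ?_
    rw [div_eq_iff hβPhil]; ring
  have hFTC : ∀ X, ∫ x in (0:ℝ)..X, F x = H X - H 0 := fun X =>
    intervalIntegral.integral_eq_sub_of_hasDerivAt (fun x _ => hHderiv x)
      (hFcont.intervalIntegrable 0 X)
  -- Step E: integrability of F on (0,∞) and limits
  have hPθ : (0:ℝ) < Philα - θ := by linarith
  have hFint : IntegrableOn F (Set.Ioi 0) := by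
    have hg : IntegrableOn (fun x => (K * Real.exp (θ * u)) * Real.exp (-(Philα - θ) * x))
        (Set.Ioi 0) := (exp_neg_integrableOn_Ioi 0 hPθ).const_mul _
    refine Integrable.mono' hg hFcont.aestronglyMeasurable.restrict ?_
    refine (ae_restrict_iff' measurableSet_Ioi).mpr ?_
    filter_upwards with x hx
    have hx0 : (0:ℝ) ≤ x := (le_of_lt hx)
    have hux : (0:ℝ) ≤ u + x := by linarith
    have hb := hZb (u + x) hux
    rw [hFdef]
    simp only [norm_mul, Real.norm_eq_abs, Real.abs_exp]
    calc Real.exp (-Philα * x) * |Z (u + x) β|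
        ≤ Real.exp (-Philα * x) * (K * Real.exp (θ * (u + x))) :=
          mul_le_mul_of_nonneg_left hb (Real.exp_nonneg _)
      _ = K * Real.exp (θ * u) * Real.exp (-(Philα - θ) * x) := by
          rw [show Real.exp (-Philα * x) * (K * Real.exp (θ * (u + x)))
            = K * (Real.exp (-Philα * x) * Real.exp (θ * (u + x))) by ring,
            ← Real.exp_add,
            show K * Real.exp (θ * u) * Real.exp (-(Philα - θ) * x)
            = K * (Real.exp (θ * u) * Real.exp (-(Philα - θ) * x)) by ring,
            ← Real.exp_add]
          ring_nf
  have hT1 : Filter.Tendsto (fun X => ∫ x in (0:ℝ)..X, F x) Filter.atTop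
      (nhds (∫ x in Set.Ioi (0:ℝ), F x)) :=
    intervalIntegral_tendsto_integral_Ioi 0 hFint Filter.tendsto_id
  -- F tends to 0 at infinity
  have hexp0 : Filter.Tendsto (fun X : ℝ => Real.exp (-((Philα - θ) * X))) Filter.atTop
      (nhds 0) := by
    refine Real.tendsto_exp_neg_atTop_nhds_zero.comp ?_
    exact Filter.Tendsto.const_mul_atTop hPθ Filter.tendsto_id
  have hF0 : Filter.Tendsto F Filter.atTop (nhds 0) := by
    have hg0 : Filter.Tendsto
        (fun X : ℝ => (K * Real.exp (θ * u)) * Real.exp (-((Philα - θ) * X)))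
        Filter.atTop (nhds 0) := by
      have := hexp0.const_mul (K * Real.exp (θ * u))
      simpa using this
    refine squeeze_zero_norm' ?_ hg0
    filter_upwards [Filter.eventually_ge_atTop (0:ℝ)] with X hX
    have hux : (0:ℝ) ≤ u + X := by linarith
    have hb := hZb (u + X) hux
    rw [hFdef]
    simp only [norm_mul, Real.norm_eq_abs, Real.abs_exp]
    calc Real.exp (-Philα * X) * |Z (u + X) β|
        ≤ Real.exp (-Philα * X) * (K * Real.exp (θ * (u + X))) :=
          mul_le_mul_of_nonneg_left hb (Real.exp_nonneg _)
      _ = K * Real.exp (θ * u) * Real.exp (-((Philα - θ) * X)) := by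
          rw [show Real.exp (-Philα * X) * (K * Real.exp (θ * (u + X)))
            = K * (Real.exp (-Philα * X) * Real.exp (θ * (u + X))) by ring,
            ← Real.exp_add,
            show K * Real.exp (θ * u) * Real.exp (-((Philα - θ) * X))
            = K * (Real.exp (θ * u) * Real.exp (-((Philα - θ) * X))) by ring,
            ← Real.exp_add]
          ring_nf
  -- Bi tends to  L := ∫_{Ioi 0} e^{-Philα t} W(u+t)
  obtain ⟨L, hLdef⟩ : ∃ L : ℝ,
      L = ∫ t in Set.Ioi (0:ℝ), Real.exp (-Philα * t) * W (u + t) := ⟨_, rfl⟩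
  have hBlim : Filter.Tendsto Bi Filter.atTop (nhds L) := by
    rw [hBidef, hLdef]
    exact intervalIntegral_tendsto_integral_Ioi 0 (shift_int u hu Philα hΦorder)
      Filter.tendsto_id
  have hZuPhil : Z u Philα = lam * L := by
    rw [hZ u hu Philα hΦorder, hψ, hLdef]
  -- combine the limits
  have hHlim : Filter.Tendsto (fun X => H X - H 0) Filter.atTop
      (nhds ((0 + ψα β * L) / (β - Philα) - H 0)) := by
    have : Filter.Tendsto H Filter.atTop (nhds ((0 + ψα β * L) / (β - Philα))) := by
      rw [hHdef]
      exact ((hF0.add (hBlim.const_mul (ψα β))).div_const (β - Philα))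
    exact this.sub_const (H 0)
  have hT1' : Filter.Tendsto (fun X => H X - H 0) Filter.atTop
      (nhds (∫ x in Set.Ioi (0:ℝ), F x)) := hT1.congr fun X => hFTC X
  have hIoiF : ∫ x in Set.Ioi (0:ℝ), F x = (0 + ψα β * L) / (β - Philα) - H 0 :=
    tendsto_nhds_unique hT1' hHlim
  -- H 0 = Z u β / (β - Philα)
  have hH0 : H 0 = Z u β / (β - Philα) := by
    rw [hHdef]
    simp only [hFdef, hBidef]
    simp [intervalIntegral.integral_same]
  -- final assembly
  rw [hLHS]
  have hrw : ∫ y in Set.Ioi (0:ℝ), Phil * Real.exp (-Philα * y) * Z (u + y) β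
      = Phil * ∫ y in Set.Ioi (0:ℝ), F y := by
    rw [← integral_const_mul]
    refine setIntegral_congr_fun measurableSet_Ioi fun y _ => ?_
    rw [hFdef]; ring
  rw [hrw, hIoiF, hH0]
  have hlam' : lam ≠ 0 := ne_of_gt hlam
  have hψβL : ψα β / lam * Z u Philα = ψα β * L := by
    rw [hZuPhil]; field_simp
  rw [hψβL]
  have hne2 : Philα - β ≠ 0 := sub_ne_zero.mpr (Ne.symm hβne)
  field_simp [hβPhil, hne2]
  ring
end
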